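/- Let A be a ring and I a two-sided ideal with I^k = 0. If A/I satisfies the Capelli identity c_m, then A satisfies the Capelli identity c_{k(m+1)}. -/

import Mathlib

open Finset

/-- The evaluation of the Capelli polynomial
`c_m(x₁,…,x_m; y₁,…,y_m) = Σ_{π ∈ S_m} sgn(π) x_{π(1)} y₁ ⋯ x_{π(m)} y_m` on a ring. -/
def capelliEval {A : Type*} [Ring A] (m : ℕ) (x y : Fin m → A) : A :=
  ∑ π : Equiv.Perm (Fin m), (Equiv.Perm.sign π : ℤ) • (List.ofFn (fun i => x (π i) * y i)).prod

section aux

open Equiv Equiv.Perm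

/-- coset-subgroup product equiv -/
noncomputable def cosetProdEquiv {G : Type*} [Group G] (H : Subgroup G) : (G ⧸ H) × H ≃ G where
  toFun p := p.1.out * p.2
  invFun g := (QuotientGroup.mk g, ⟨(QuotientGroup.mk g : G ⧸ H).out⁻¹ * g,
      QuotientGroup.eq.mp (QuotientGroup.out_eq' _)⟩)
  left_inv := by
    rintro ⟨q, h, hh⟩
    have h1 : (QuotientGroup.mk (q.out * h) : G ⧸ H) = q := by
      rw [QuotientGroup.mk_mul_of_mem _ hh, QuotientGroup.out_eq']
    refine Prod.ext h1 (Subtype.ext ?_)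
    show (QuotientGroup.mk (q.out * h) : G ⧸ H).out⁻¹ * (q.out * h) = h
    rw [h1, inv_mul_cancel_left]
  right_inv g := by simp [mul_inv_cancel_left]

/-- permCongr as a monoid hom -/
def permCongrHom {α β : Type*} (e : α ≃ β) : Equiv.Perm α →* Equiv.Perm β where
  toFun := e.permCongr
  map_one' := by ext x; simp
  map_mul' p q := by ext x; simp

def blockHom (a b : ℕ) : Equiv.Perm (Fin a) × Equiv.Perm (Fin b) →* Equiv.Perm (Fin (a + b)) :=
  (_root_.permCongrHom finSumFinEquiv).comp (Equiv.Perm.sumCongrHom (Fin a) (Fin b))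

lemma blockHom_castAdd {a b : ℕ} (p : Equiv.Perm (Fin a) × Equiv.Perm (Fin b)) (i : Fin a) :
    blockHom a b p (Fin.castAdd b i) = Fin.castAdd b (p.1 i) := by
  simp [blockHom, _root_.permCongrHom, Equiv.Perm.sumCongrHom]

lemma blockHom_natAdd {a b : ℕ} (p : Equiv.Perm (Fin a) × Equiv.Perm (Fin b)) (i : Fin b) :
    blockHom a b p (Fin.natAdd a i) = Fin.natAdd a (p.2 i) := by
  simp [blockHom, _root_.permCongrHom, Equiv.Perm.sumCongrHom]

lemma blockHom_sign {a b : ℕ} (p : Equiv.Perm (Fin a) × Equiv.Perm (Fin b)) :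
    Equiv.Perm.sign (blockHom a b p) = Equiv.Perm.sign p.1 * Equiv.Perm.sign p.2 := by
  simp [blockHom, _root_.permCongrHom, Equiv.Perm.sign_permCongr, Equiv.Perm.sumCongrHom,
    Equiv.Perm.sign_sumCongr]

end aux

section laplace

open Equiv Equiv.Perm

variable {A : Type*} [Ring A]

lemma capelli_laplace_mem (a b : ℕ) (T : AddSubgroup A) (x y : Fin (a + b) → A)
    (hT : ∀ σ : Equiv.Perm (Fin (a + b)),
      capelliEval a (fun i => x (σ (Fin.castAdd b i))) (fun i => y (Fin.castAdd b i)) *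
        capelliEval b (fun i => x (σ (Fin.natAdd a i))) (fun i => y (Fin.natAdd a i)) ∈ T) :
    capelliEval (a + b) x y ∈ T := by
  classical
  set G := Equiv.Perm (Fin (a + b))
  set H : Subgroup G := (blockHom a b).range with hH
  haveI : Fintype (G ⧸ H) := Fintype.ofFinite _
  rw [capelliEval, ← Equiv.sum_comp (cosetProdEquiv H), Fintype.sum_prod_type]
  refine AddSubgroup.sum_mem T fun q _ => ?_
  -- sum over H: reindex by pairs
  have hinj : Function.Injective (blockHom a b) := fun p q h =>
    Equiv.Perm.sumCongrHom_injective (finSumFinEquiv.permCongr.injective (by exact h))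
  have hsum : ∀ F : H → A, ∑ h : H, F h
      = ∑ p : Equiv.Perm (Fin a) × Equiv.Perm (Fin b), F ⟨blockHom a b p, ⟨p, rfl⟩⟩ := by
    intro F
    exact (Fintype.sum_equiv ((MonoidHom.ofInjective hinj).toEquiv) _ _ fun p => rfl).symm
  rw [hsum, Fintype.sum_prod_type]
  set σ := (q : G ⧸ H).out with hσ
  have key : ∀ τ₁ : Equiv.Perm (Fin a), ∀ τ₂ : Equiv.Perm (Fin b),
      (Equiv.Perm.sign (cosetProdEquiv H (q, ⟨blockHom a b (τ₁, τ₂), ⟨(τ₁, τ₂), rfl⟩⟩)) : ℤ) •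
        (List.ofFn (fun i => x ((cosetProdEquiv H (q, ⟨blockHom a b (τ₁, τ₂), ⟨(τ₁, τ₂), rfl⟩⟩)) i) * y i)).prod
      = (Equiv.Perm.sign σ : ℤ) •
        (((Equiv.Perm.sign τ₁ : ℤ) • (List.ofFn (fun i : Fin a => x (σ (Fin.castAdd b (τ₁ i))) * y (Fin.castAdd b i))).prod) *
         ((Equiv.Perm.sign τ₂ : ℤ) • (List.ofFn (fun i : Fin b => x (σ (Fin.natAdd a (τ₂ i))) * y (Fin.natAdd a i))).prod)) := by
    intro τ₁ τ₂
    have happ : ∀ i, (cosetProdEquiv H (q, ⟨blockHom a b (τ₁, τ₂), ⟨(τ₁, τ₂), rfl⟩⟩)) i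
        = σ (blockHom a b (τ₁, τ₂) i) := fun i => rfl
    have hsign : (Equiv.Perm.sign (cosetProdEquiv H (q, ⟨blockHom a b (τ₁, τ₂), ⟨(τ₁, τ₂), rfl⟩⟩)) : ℤ)
        = (Equiv.Perm.sign σ : ℤ) * ((Equiv.Perm.sign τ₁ : ℤ) * (Equiv.Perm.sign τ₂ : ℤ)) := by
      show ((Equiv.Perm.sign (σ * blockHom a b (τ₁, τ₂))) : ℤ) = _
      rw [map_mul, blockHom_sign]
      push_cast
      ring
    rw [hsign]
    rw [List.ofFn_add (f := fun i => x ((cosetProdEquiv H (q, ⟨blockHom a b (τ₁, τ₂), ⟨(τ₁, τ₂), rfl⟩⟩)) i) * y i), List.prod_append]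
    simp only [happ, blockHom_castAdd, blockHom_natAdd]
    rw [smul_mul_assoc, mul_smul_comm, smul_smul, smul_smul, mul_assoc]
    simp only [show ∀ i : Fin a, Fin.castLE (Nat.le_add_right a b) i = Fin.castAdd b i from fun i => rfl, blockHom_castAdd]
  simp only [key]
  have h2 : (∑ τ₁ : Equiv.Perm (Fin a), ∑ τ₂ : Equiv.Perm (Fin b),
      (Equiv.Perm.sign σ : ℤ) •
        (((Equiv.Perm.sign τ₁ : ℤ) • (List.ofFn (fun i : Fin a => x (σ (Fin.castAdd b (τ₁ i))) * y (Fin.castAdd b i))).prod) *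
         ((Equiv.Perm.sign τ₂ : ℤ) • (List.ofFn (fun i : Fin b => x (σ (Fin.natAdd a (τ₂ i))) * y (Fin.natAdd a i))).prod)))
      = (Equiv.Perm.sign σ : ℤ) •
        (capelliEval a (fun i => x (σ (Fin.castAdd b i))) (fun i => y (Fin.castAdd b i)) *
         capelliEval b (fun i => x (σ (Fin.natAdd a i))) (fun i => y (Fin.natAdd a i))) := by
    rw [capelliEval, capelliEval, Finset.sum_mul_sum, Finset.smul_sum]
    exact Finset.sum_congr rfl fun τ₁ _ => (Finset.smul_sum).symm
  rw [h2]
  exact zsmul_mem (hT σ) _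

lemma capelli_succ_mem (I : TwoSidedIdeal A) (m : ℕ)
    (hquot : ∀ x y : Fin m → A, capelliEval m x y ∈ I) :
    ∀ x y : Fin (m + 1) → A, capelliEval (m + 1) x y ∈ I := by
  intro x y
  rw [capelliEval, ← Equiv.sum_comp (Equiv.Perm.decomposeFin (n := m)).symm,
    Fintype.sum_prod_type]
  refine sum_mem fun p _ => ?_
  have key : ∀ e : Equiv.Perm (Fin m),
      (Equiv.Perm.sign (Equiv.Perm.decomposeFin.symm (p, e)) : ℤ) •
        (List.ofFn (fun i => x (Equiv.Perm.decomposeFin.symm (p, e) i) * y i)).prod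
      = ((if p = 0 then (1 : ℤ) else -1)) •
        ((x p * y 0) * ((Equiv.Perm.sign e : ℤ) •
          (List.ofFn (fun i : Fin m => x (Equiv.swap 0 p (e i).succ) * y i.succ)).prod)) := by
    intro e
    rw [List.ofFn_succ]
    simp only [Equiv.Perm.decomposeFin_symm_apply_zero, Equiv.Perm.decomposeFin_symm_apply_succ,
      Equiv.Perm.decomposeFin.symm_sign, List.prod_cons]
    rw [mul_smul_comm, smul_smul]
    congr 1
    split <;> push_cast <;> ring
  simp only [key]
  rw [← Finset.smul_sum, ← Finset.mul_sum]
  refine I.zsmul_mem _ (I.mul_mem_left _ _ ?_)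
  exact hquot (fun j => x (Equiv.swap 0 p j.succ)) (fun i => y i.succ)

end laplace

section main

variable {A : Type*} [Ring A]

def prodSet (I : TwoSidedIdeal A) (j : ℕ) : Set A :=
  {a | ∃ f : Fin j → A, (∀ i, f i ∈ I) ∧ a = (List.ofFn f).prod}

lemma mul_mem_closure_prodSet (I : TwoSidedIdeal A) (j : ℕ) {s t : A} (hs : s ∈ I)
    (ht : t ∈ AddSubgroup.closure (prodSet I j)) :
    s * t ∈ AddSubgroup.closure (prodSet I (j + 1)) := by
  induction ht using AddSubgroup.closure_induction with
  | mem a ha =>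
    obtain ⟨f, hf, rfl⟩ := ha
    refine AddSubgroup.subset_closure ⟨Fin.cons s f, ?_, ?_⟩
    · intro i
      refine Fin.cases ?_ ?_ i
      · simpa using hs
      · intro j; simpa using hf j
    · rw [List.ofFn_succ]
      simp
  | zero => simpa using AddSubgroup.zero_mem _
  | add a b _ _ pa pb => rw [mul_add]; exact AddSubgroup.add_mem _ pa pb
  | neg a _ pa => rw [mul_neg]; exact AddSubgroup.neg_mem _ pa

lemma capelliEval_cast {n n' : ℕ} (h : n = n') (x y : Fin n → A) :
    capelliEval n x y = capelliEval n' (x ∘ Fin.cast h.symm) (y ∘ Fin.cast h.symm) := by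
  subst h
  rfl

lemma capelli_mem_closure (I : TwoSidedIdeal A) (m : ℕ)
    (hquot : ∀ x y : Fin m → A, capelliEval m x y ∈ I) :
    ∀ j, 1 ≤ j → ∀ x y : Fin (j * (m + 1)) → A,
      capelliEval (j * (m + 1)) x y ∈ AddSubgroup.closure (prodSet I j) := by
  intro j hj
  induction j, hj using Nat.le_induction with
  | base =>
    intro x y
    rw [capelliEval_cast (one_mul (m + 1)) x y]
    refine AddSubgroup.subset_closure
      ⟨fun _ => capelliEval (m + 1) (x ∘ Fin.cast (one_mul (m + 1)).symm)
        (y ∘ Fin.cast (one_mul (m + 1)).symm), fun _ => capelli_succ_mem I m hquot _ _, by simp⟩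
  | succ j hj ih =>
    intro x y
    have hn : (j + 1) * (m + 1) = (m + 1) + j * (m + 1) := by ring
    rw [capelliEval_cast hn x y]
    refine capelli_laplace_mem (m + 1) (j * (m + 1)) _ _ _ fun σ => ?_
    exact mul_mem_closure_prodSet I j (capelli_succ_mem I m hquot _ _) (ih _ _)

end main


/-- Let `A` be a ring and `I` a two-sided ideal with `I^k = 0`.  If `A/I` satisfies the
Capelli identity `c_m` (i.e. every evaluation of `c_m` on `A` lies in `I`),
then `A` satisfies the Capelli identity `c_{k(m+1)}`. -/
theorem stmt_5 (A : Type*) [Ring A] (I : TwoSidedIdeal A) (k m : ℕ) (hk : 0 < k)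
    (hI : ∀ f : Fin k → A, (∀ i, f i ∈ I) → (List.ofFn f).prod = 0)
    
    (hquot : ∀ x y : Fin m → A, capelliEval m x y ∈ I) :
    ∀ x y : Fin (k * (m + 1)) → A, capelliEval (k * (m + 1)) x y = 0 := by
  intro x y
  have h := capelli_mem_closure I m hquot k hk x y
  have hle : AddSubgroup.closure (prodSet I k) ≤ ⊥ := by
    rw [AddSubgroup.closure_le]
    rintro a ⟨f, hf, rfl⟩
    simpa [AddSubgroup.mem_bot] using hI f hf
  exact AddSubgroup.mem_bot.mp (hle h)
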